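/- Let p(z) be a nonzero polynomial with complex coefficients and no roots on the unit circle. Then the Mahler measure M(p) = |c|·∏_{|α|>1}|α| (product over roots α of p with |α| > 1, c the leading coefficient) satisfies M(p) = exp(∫_0^1 log|p(e^{2πit})| dt). -/

import Mathlib

open Polynomial Real Metric

lemma cont_log_abs {g : ℝ → ℂ} (hg : Continuous g) (h0 : ∀ θ, g θ ≠ 0) :
    Continuous fun θ => Real.log (‖g θ‖) := by
  refine continuous_iff_continuousAt.2 fun θ => ?_
  exact (Real.continuousAt_log (by simp [h0 θ])).comp
    (continuous_norm.comp hg).continuousAt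

lemma one_sub_mul_ne {w z : ℂ} (hw : ‖w‖ < 1) (hz : ‖z‖ ≤ 1) :
    0 < (1 - w * z).re := by
  have h1 : ‖w * z‖ < 1 := by
    rw [norm_mul]
    calc ‖w‖ * ‖z‖ ≤ ‖w‖ * 1 :=
          mul_le_mul_of_nonneg_left hz (norm_nonneg w)
      _ < 1 := by simpa using hw
  have h2 : (w * z).re < 1 := lt_of_le_of_lt (Complex.re_le_norm _) h1
  simp only [Complex.sub_re, Complex.one_re]
  linarith

lemma integral_log_abs_one_sub_mul {w : ℂ} (hw : ‖w‖ < 1) :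
    ∫ θ in (0:ℝ)..(2*π), Real.log (‖1 - w * circleMap 0 1 θ‖) = 0 := by
  set f : ℂ → ℂ := fun z => Complex.log (1 - w * z) with hf
  have hmem : ∀ z : ℂ, ‖z‖ ≤ 1 → (1 - w * z) ∈ Complex.slitPlane :=
    fun z hz => Complex.mem_slitPlane_iff.2 (Or.inl (one_sub_mul_ne hw hz))
  have hdiff : DiffContOnCl ℂ f (ball (0:ℂ) 1) := by
    refine DifferentiableOn.diffContOnCl ?_
    rw [closure_ball (0:ℂ) one_ne_zero]
    intro z hz
    have hz1 : ‖z‖ ≤ 1 := by simpa [Complex.dist_eq] using hz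
    exact ((Complex.differentiableAt_log (hmem z hz1)).comp z
      (((differentiableAt_const w).mul differentiableAt_id).const_sub 1)).differentiableWithinAt
  have key := hdiff.circleIntegral_sub_inv_smul (w := 0) (by simp)
  have hf0 : f 0 = 0 := by simp [hf]
  rw [hf0, smul_zero] at key
  have hcm : ∀ θ : ℝ, circleMap 0 1 θ ≠ 0 := fun θ => circleMap_ne_center one_ne_zero
  rw [circleIntegral] at key
  have key2 : ∫ θ in (0:ℝ)..(2*π), Complex.I * f (circleMap 0 1 θ) = 0 := by
    refine Eq.trans (intervalIntegral.integral_congr fun θ _ => ?_) key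
    simp only [deriv_circleMap, smul_eq_mul, sub_zero]
    rw [mul_comm (circleMap 0 1 θ) Complex.I, mul_assoc, ← mul_assoc (circleMap 0 1 θ),
      mul_inv_cancel₀ (hcm θ), one_mul]
  rw [intervalIntegral.integral_const_mul, mul_eq_zero] at key2
  have key3 : ∫ θ in (0:ℝ)..(2*π), f (circleMap 0 1 θ) = 0 :=
    key2.resolve_left Complex.I_ne_zero
  have hcont : Continuous fun θ : ℝ => f (circleMap 0 1 θ) := by
    refine continuous_iff_continuousAt.2 fun θ => ?_
    have h1 : ‖circleMap 0 1 θ‖ ≤ 1 := le_of_eq (by simp)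
    exact ContinuousAt.clog
      (continuous_const.sub (continuous_const.mul (continuous_circleMap 0 1))).continuousAt
      (hmem (circleMap 0 1 θ) h1)
  have hint : IntervalIntegrable (fun θ : ℝ => f (circleMap 0 1 θ))
      MeasureTheory.volume 0 (2*π) := hcont.intervalIntegrable _ _
  have := Complex.reCLM.intervalIntegral_comp_comm hint
  rw [key3] at this
  simpa [hf, Complex.log_re, Complex.reCLM_apply] using this

lemma cont2 {a : ℂ} (ha : ‖a‖ ≠ 1) :
    Continuous fun θ : ℝ => Real.log (‖circleMap 0 1 θ - a‖) := by
  refine cont_log_abs ((continuous_circleMap 0 1).sub continuous_const) fun θ => ?_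
  refine sub_ne_zero.2 fun h => ha ?_
  rw [← h]; simp

lemma integral_log_abs_circleMap_sub {a : ℂ} (ha : ‖a‖ ≠ 1) :
    ∫ θ in (0:ℝ)..(2*π), Real.log (‖circleMap 0 1 θ - a‖)
      = 2*π * max (Real.log (‖a‖)) 0 := by
  rcases lt_or_gt_of_ne ha with h | h
  · have key : ∀ θ : ℝ, ‖circleMap 0 1 θ - a‖
        = ‖1 - (starRingEnd ℂ) a * circleMap 0 1 θ‖ := by
      intro θ
      set z := circleMap 0 1 θ with hzdef
      have hz : ‖z‖ = 1 := by simp [hzdef]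
      have hz2 : (starRingEnd ℂ) z * z = 1 := by
        rw [mul_comm, Complex.mul_conj, Complex.normSq_eq_norm_sq, hz]; norm_num
      have e1 : (starRingEnd ℂ) z * (z - a) = 1 - (starRingEnd ℂ) z * a := by
        rw [mul_sub, hz2]
      calc ‖z - a‖
          = ‖(starRingEnd ℂ) z * (z - a)‖ := by
            rw [norm_mul, Complex.norm_conj, hz, one_mul]
        _ = ‖1 - (starRingEnd ℂ) z * a‖ := by rw [e1]
        _ = ‖(starRingEnd ℂ) (1 - (starRingEnd ℂ) z * a)‖ :=
            (Complex.norm_conj _).symm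
        _ = ‖1 - (starRingEnd ℂ) a * z‖ := by
            rw [map_sub, map_one, map_mul, Complex.conj_conj, mul_comm]
    have h0 : max (Real.log (‖a‖)) 0 = 0 :=
      max_eq_right (Real.log_nonpos (norm_nonneg a) h.le)
    rw [h0, mul_zero]
    rw [intervalIntegral.integral_congr (fun θ _ => by rw [key θ])]
    exact integral_log_abs_one_sub_mul (by rwa [Complex.norm_conj])
  · have ha0 : a ≠ 0 := fun h0 => by simp [h0] at h; linarith
    have hainv : ‖a⁻¹‖ < 1 := by
      rw [norm_inv]
      exact inv_lt_one_of_one_lt₀ h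
    have key : ∀ θ : ℝ, Real.log (‖circleMap 0 1 θ - a‖)
        = Real.log (‖a‖) + Real.log (‖1 - a⁻¹ * circleMap 0 1 θ‖) := by
      intro θ
      set z := circleMap 0 1 θ with hzdef
      have hz : ‖z‖ = 1 := by simp [hzdef]
      have e1 : z - a = (-a) * (1 - a⁻¹ * z) := by
        field_simp
        ring
      have hne : (1 : ℂ) - a⁻¹ * z ≠ 0 := by
        intro h0
        have : ‖a⁻¹ * z‖ = 1 := by
          rw [sub_eq_zero] at h0; rw [← h0]; simp
        rw [norm_mul, hz, mul_one] at this
        rw [this] at hainv; linarith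
      rw [e1, norm_mul, norm_neg,
        Real.log_mul (norm_ne_zero_iff.mpr ha0) (norm_ne_zero_iff.mpr hne)]
    rw [intervalIntegral.integral_congr (fun θ _ => key θ)]
    have hi1 : IntervalIntegrable (fun _ : ℝ => Real.log (‖a‖))
        MeasureTheory.volume 0 (2*π) := intervalIntegrable_const
    have hc2 : Continuous fun θ : ℝ => Real.log (‖1 - a⁻¹ * circleMap 0 1 θ‖) := by
      refine cont_log_abs (continuous_const.sub (continuous_const.mul (continuous_circleMap 0 1)))
        fun θ => ?_
      intro h0
      have : ‖a⁻¹ * circleMap 0 1 θ‖ = 1 := by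
        rw [sub_eq_zero] at h0; rw [← h0]; simp
      rw [norm_mul] at this; simp at this
      exact ha this
    rw [intervalIntegral.integral_add hi1 (hc2.intervalIntegrable _ _),
      integral_log_abs_one_sub_mul hainv, add_zero, intervalIntegral.integral_const,
      max_eq_left (Real.log_pos h).le]
    simp [smul_eq_mul]

lemma cont_msum (s : Multiset ℂ) (hs : ∀ a ∈ s, ‖a‖ ≠ 1) :
    Continuous fun θ : ℝ =>
      (s.map fun a => Real.log (‖circleMap 0 1 θ - a‖)).sum := by
  induction s using Multiset.induction with
  | empty => simpa using continuous_const
  | cons a s ih =>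
    simp only [Multiset.map_cons, Multiset.sum_cons]
    exact (cont2 (hs a (Multiset.mem_cons_self _ _))).add
      (ih fun b hb => hs b (Multiset.mem_cons_of_mem hb))

lemma integral_msum (s : Multiset ℂ) (hs : ∀ a ∈ s, ‖a‖ ≠ 1) :
    (∫ θ in (0:ℝ)..(2*π),
        (s.map fun a => Real.log (‖circleMap 0 1 θ - a‖)).sum)
      = (s.map fun a => 2*π * max (Real.log (‖a‖)) 0).sum := by
  induction s using Multiset.induction with
  | empty => simp
  | cons a s ih =>
    have ha := hs a (Multiset.mem_cons_self _ _)
    have hs' : ∀ b ∈ s, ‖b‖ ≠ 1 := fun b hb => hs b (Multiset.mem_cons_of_mem hb)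
    simp only [Multiset.map_cons, Multiset.sum_cons]
    rw [intervalIntegral.integral_add ((cont2 ha).intervalIntegrable _ _)
      ((cont_msum s hs').intervalIntegrable _ _),
      integral_log_abs_circleMap_sub ha, ih hs']

lemma log_abs_mprod (s : Multiset ℂ) (z : ℂ) (hz : ∀ a ∈ s, z - a ≠ 0) :
    Real.log (‖(s.map fun a => z - a).prod‖)
      = (s.map fun a => Real.log (‖z - a‖)).sum := by
  induction s using Multiset.induction with
  | empty => simp
  | cons a s ih =>
    have ha := hz a (Multiset.mem_cons_self _ _)
    have hz' : ∀ b ∈ s, z - b ≠ 0 := fun b hb => hz b (Multiset.mem_cons_of_mem hb)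
    have hprod : (s.map fun a => z - a).prod ≠ 0 := by
      refine Multiset.prod_ne_zero fun h0 => ?_
      obtain ⟨b, hb, hb0⟩ := Multiset.mem_map.1 h0
      exact hz' b hb hb0
    simp only [Multiset.map_cons, Multiset.sum_cons, Multiset.prod_cons]
    rw [norm_mul, Real.log_mul (norm_ne_zero_iff.mpr ha) (norm_ne_zero_iff.mpr hprod), ih hz']

lemma exp_msum_max (s : Multiset ℂ) :
    Real.exp ((s.map fun a => max (Real.log (‖a‖)) 0).sum)
      = ((s.filter fun a => 1 < ‖a‖).map (fun α : ℂ => ‖α‖)).prod := by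
  induction s using Multiset.induction with
  | empty => simp
  | cons a s ih =>
    rw [Multiset.map_cons, Multiset.sum_cons, Real.exp_add, ih, Multiset.filter_cons]
    by_cases h : 1 < ‖a‖
    · rw [max_eq_left (Real.log_pos h).le, Real.exp_log (lt_trans one_pos h)]
      simp [h]
    · rw [max_eq_right (Real.log_nonpos (norm_nonneg a) (not_lt.1 h)), Real.exp_zero,
        one_mul]
      simp [h]

/-- For a nonzero complex polynomial `p` with no roots on the unit circle, the
Mahler measure `M(p) = |c| ∏_{|α|>1} |α|` (over the roots `α` of `p` with
multiplicity, `c` the leading coefficient) satisfies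
`M(p) = exp (∫_0^1 log |p(e^{2πit})| dt)`. -/
theorem mahler_measure_eq_exp_integral (p : Polynomial ℂ) (hp : p ≠ 0)
    (hcirc : ∀ z : ℂ, ‖z‖ = 1 → p.eval z ≠ 0) :
    ‖p.leadingCoeff‖ *
        ((p.roots.filter fun α => 1 < ‖α‖).map (fun α : ℂ => ‖α‖)).prod =
      Real.exp (∫ t in (0:ℝ)..1,
        Real.log ‖p.eval (Complex.exp (2 * π * Complex.I * t))‖) := by
  have hc : p.leadingCoeff ≠ 0 := leadingCoeff_ne_zero.2 hp
  have hroots : ∀ a ∈ p.roots, ‖a‖ ≠ 1 := fun a ha h1 =>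
    hcirc a h1 (isRoot_of_mem_roots ha)
  have hfac := Splits.eq_prod_roots (IsAlgClosed.splits p)
  have heval : ∀ θ : ℝ, Real.log (‖p.eval (circleMap 0 1 θ)‖)
      = Real.log (‖p.leadingCoeff‖)
        + (p.roots.map fun a => Real.log (‖circleMap 0 1 θ - a‖)).sum := by
    intro θ
    set z := circleMap 0 1 θ with hzdef
    have hz : ‖z‖ = 1 := by simp [hzdef]
    have hz' : ∀ a ∈ p.roots, z - a ≠ 0 := by
      intro a ha h0
      rw [sub_eq_zero] at h0
      exact hroots a ha (by rw [← h0, hz])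
    have hprod : (p.roots.map fun a => z - a).prod ≠ 0 := Multiset.prod_ne_zero (by
      intro h0; obtain ⟨b, hb, hb0⟩ := Multiset.mem_map.1 h0; exact hz' b hb hb0)
    conv_lhs => rw [hfac]
    rw [eval_mul, eval_C, eval_multiset_prod, Multiset.map_map]
    simp only [Function.comp, eval_sub, eval_X, eval_C]
    rw [norm_mul, Real.log_mul (norm_ne_zero_iff.mpr hc) (norm_ne_zero_iff.mpr hprod),
      log_abs_mprod _ _ hz']
  have hsub : ∀ t : ℝ, Complex.exp (2*↑π*Complex.I*↑t) = circleMap 0 1 (2*π*t) := by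
    intro t
    simp only [circleMap, zero_add, one_mul]
    congr 1
    push_cast
    ring
  have hπ : (2*π) ≠ 0 := by positivity
  have h1 : (∫ t in (0:ℝ)..1,
        Real.log (‖p.eval (Complex.exp (2*↑π*Complex.I*↑t))‖))
      = (2*π)⁻¹ * ∫ θ in (0:ℝ)..(2*π),
          Real.log (‖p.eval (circleMap 0 1 θ)‖) := by
    rw [intervalIntegral.integral_congr (fun t _ => by rw [hsub t])]
    rw [intervalIntegral.integral_comp_mul_left
      (fun θ => Real.log (‖p.eval (circleMap 0 1 θ)‖)) hπ]
    norm_num [smul_eq_mul]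
  have h2 : (∫ θ in (0:ℝ)..(2*π), Real.log (‖p.eval (circleMap 0 1 θ)‖))
      = 2*π*Real.log (‖p.leadingCoeff‖)
        + 2*π*((p.roots.map fun a => max (Real.log (‖a‖)) 0).sum) := by
    rw [intervalIntegral.integral_congr (fun θ _ => heval θ),
      intervalIntegral.integral_add intervalIntegrable_const
        ((cont_msum _ hroots).intervalIntegrable _ _),
      integral_msum _ hroots, intervalIntegral.integral_const, Multiset.sum_map_mul_left]
    simp [smul_eq_mul]
  rw [h1, h2]
  have h3 : (2*π)⁻¹ * (2*π*Real.log (‖p.leadingCoeff‖)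
        + 2*π*((p.roots.map fun a => max (Real.log (‖a‖)) 0).sum))
      = Real.log (‖p.leadingCoeff‖)
        + (p.roots.map fun a => max (Real.log (‖a‖)) 0).sum := by
    field_simp
  rw [h3, Real.exp_add, Real.exp_log (norm_pos_iff.mpr hc), exp_msum_max]
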